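/- Let R be a solid invertible (d+1)×(d+1) matrix over F. Then the transpose of R is diagonally equivalent to R^{-1} if and only if there exists an invertible matrix K such that the antiautomorphism A ↦ K A^t K^{-1} of the matrix algebra fixes Δ_{ii} and fixes R Δ_{ii} R^{-1} for all 0 ≤ i ≤ d. -/

import Mathlib

open Matrix

/-- An invertible matrix is *solid* whenever all entries in row 0 and column 0
of both the matrix and its inverse are nonzero. -/
def Solid {F : Type} [Field F] {d : ℕ} (R : Matrix (Fin (d+1)) (Fin (d+1)) F) : Prop :=
  IsUnit R ∧ (∀ i, R i 0 ≠ 0) ∧ (∀ j, R 0 j ≠ 0) ∧ (∀ i, R⁻¹ i 0 ≠ 0) ∧ (∀ j, R⁻¹ 0 j ≠ 0)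

/-- Matrices `S`, `T` are *diagonally equivalent* whenever `T = H * S * K` for some
invertible diagonal matrices `H`, `K`. -/
def DiagEquiv {F : Type} [Field F] {d : ℕ} (S T : Matrix (Fin (d+1)) (Fin (d+1)) F) : Prop :=
  ∃ H K : Matrix (Fin (d+1)) (Fin (d+1)) F,
    H.IsDiag ∧ IsUnit H ∧ K.IsDiag ∧ IsUnit K ∧ T = H * S * K

/-- A matrix is *normalized* whenever all entries of its column 0 equal 1, and all
entries of column 0 of its inverse are equal to each other. -/
def Normalized {F : Type} [Field F] {d : ℕ} (S : Matrix (Fin (d+1)) (Fin (d+1)) F) : Prop :=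
  (∀ i, S i 0 = 1) ∧ (∀ i, S⁻¹ i 0 = S⁻¹ 0 0)

section Aux

variable {F : Type} [Field F] {d : ℕ}

lemma aux_trans_std (i : Fin (d+1)) :
    (single i i 1 : Matrix (Fin (d+1)) (Fin (d+1)) F)ᵀ = single i i 1 := by
  ext a b
  simp [single, and_comm]

lemma aux_isDiag_std (i : Fin (d+1)) :
    (single i i 1 : Matrix (Fin (d+1)) (Fin (d+1)) F).IsDiag := by
  intro a b hab
  simp only [single, of_apply, ite_eq_right_iff, one_ne_zero]
  rintro ⟨rfl, rfl⟩
  exact absurd rfl hab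

lemma aux_diag_comm {A B : Matrix (Fin (d+1)) (Fin (d+1)) F}
    (hA : A.IsDiag) (hB : B.IsDiag) : A * B = B * A := by
  rw [← hA.diagonal_diag, ← hB.diagonal_diag, diagonal_mul_diagonal, diagonal_mul_diagonal]
  exact congrArg diagonal (funext fun i => mul_comm _ _)

lemma aux_isDiag_of_comm (M : Matrix (Fin (d+1)) (Fin (d+1)) F)
    (h : ∀ i, M * single i i 1 = single i i 1 * M) : M.IsDiag := by
  intro a b hab
  have := congrFun (congrFun (h b) a) b
  simpa [mul_apply, single, Finset.sum_ite_eq, hab, Ne.symm hab] using this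

end Aux

theorem stmt9 {F : Type} [Field F] (d : ℕ)
    (R : Matrix (Fin (d+1)) (Fin (d+1)) F) (hR : Solid R) :
    DiagEquiv R⁻¹ Rᵀ ↔
      ∃ K : Matrix (Fin (d+1)) (Fin (d+1)) F, IsUnit K ∧
        ∀ i : Fin (d+1),
          K * (single i i 1 : Matrix (Fin (d+1)) (Fin (d+1)) F)ᵀ * K⁻¹
            = single i i 1 ∧
          K * (R * single i i 1 * R⁻¹)ᵀ * K⁻¹
            = R * single i i 1 * R⁻¹ := by
  have hRdet : IsUnit R.det := (isUnit_iff_isUnit_det R).mp hR.1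
  have hRmul : R * R⁻¹ = 1 := mul_nonsing_inv R hRdet
  have hRmul' : R⁻¹ * R = 1 := nonsing_inv_mul R hRdet
  have hRTdet : IsUnit (Rᵀ).det := by rwa [det_transpose]
  have hRTmul : Rᵀ * (Rᵀ)⁻¹ = 1 := mul_nonsing_inv _ hRTdet
  have hRTmul' : (Rᵀ)⁻¹ * Rᵀ = 1 := nonsing_inv_mul _ hRTdet
  constructor
  · rintro ⟨H, K, hHd, hHu, hKd, hKu, hE⟩
    have hKdet : IsUnit K.det := (isUnit_iff_isUnit_det K).mp hKu
    have hKmul : K * K⁻¹ = 1 := mul_nonsing_inv K hKdet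
    have hKmul' : K⁻¹ * K = 1 := nonsing_inv_mul K hKdet
    have hHdet : IsUnit H.det := (isUnit_iff_isUnit_det H).mp hHu
    have hHmul' : H⁻¹ * H = 1 := nonsing_inv_mul H hHdet
    refine ⟨K, hKu, fun i => ⟨?_, ?_⟩⟩
    · rw [aux_trans_std, aux_diag_comm hKd (aux_isDiag_std i), Matrix.mul_assoc, hKmul,
        Matrix.mul_one]
    · have hTinv : (Rᵀ)⁻¹ = K⁻¹ * R * H⁻¹ := by
        rw [hE, Matrix.mul_inv_rev, Matrix.mul_inv_rev, nonsing_inv_nonsing_inv R hRdet,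
          Matrix.mul_assoc]
      have hΔH : H⁻¹ * (single i i 1 * H) = single i i 1 := by
        rw [← aux_diag_comm hHd (aux_isDiag_std i), ← Matrix.mul_assoc, hHmul', Matrix.one_mul]
      rw [transpose_mul, transpose_mul, transpose_nonsing_inv, aux_trans_std]
      calc K * ((Rᵀ)⁻¹ * (single i i 1 * Rᵀ)) * K⁻¹
            = K * (K⁻¹ * R * H⁻¹ * (single i i 1 * (H * R⁻¹ * K))) * K⁻¹ := by
              rw [hTinv, hE]
        _ = (K * K⁻¹) * R * (H⁻¹ * (single i i 1 * H)) * R⁻¹ * (K * K⁻¹) := by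
              simp only [Matrix.mul_assoc]
        _ = R * single i i 1 * R⁻¹ := by
              rw [hKmul, hΔH, Matrix.one_mul, Matrix.mul_one, Matrix.mul_assoc]
  · rintro ⟨K, hKu, h⟩
    have hKdet : IsUnit K.det := (isUnit_iff_isUnit_det K).mp hKu
    have hKmul : K * K⁻¹ = 1 := mul_nonsing_inv K hKdet
    have hKmul' : K⁻¹ * K = 1 := nonsing_inv_mul K hKdet
    have h1 : ∀ i, K * single i i 1 = single i i 1 * K := by
      intro i
      have hi := (h i).1
      rw [aux_trans_std] at hi
      calc K * single i i 1
          = K * single i i 1 * (K⁻¹ * K) := by rw [hKmul', Matrix.mul_one]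
        _ = (K * single i i 1 * K⁻¹) * K := by simp only [Matrix.mul_assoc]
        _ = single i i 1 * K := by rw [hi]
    have hKd : K.IsDiag := aux_isDiag_of_comm K h1
    set M : Matrix (Fin (d+1)) (Fin (d+1)) F := R⁻¹ * K * (Rᵀ)⁻¹ with hM
    have hMu : IsUnit M :=
      ((isUnit_nonsing_inv_iff.mpr hR.1).mul hKu).mul
        (isUnit_nonsing_inv_iff.mpr ((isUnit_iff_isUnit_det _).mpr hRTdet))
    have hMdet : IsUnit M.det := (isUnit_iff_isUnit_det M).mp hMu
    have hMmul' : M⁻¹ * M = 1 := nonsing_inv_mul M hMdet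
    have hMRT : M * Rᵀ = R⁻¹ * K := by
      rw [hM, Matrix.mul_assoc, hRTmul', Matrix.mul_one]
    have h2 : ∀ i, M * single i i 1 = single i i 1 * M := by
      intro i
      have hi := (h i).2
      rw [transpose_mul, transpose_mul, transpose_nonsing_inv, aux_trans_std] at hi
      have key : M * single i i 1 * Rᵀ = single i i 1 * (M * Rᵀ) := by
        calc M * single i i 1 * Rᵀ
            = R⁻¹ * (K * ((Rᵀ)⁻¹ * (single i i 1 * Rᵀ)) * K⁻¹) * K := by
              simp only [hM, Matrix.mul_assoc, ← Matrix.mul_assoc K⁻¹ K,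
                hKmul', Matrix.one_mul, Matrix.mul_one]
          _ = R⁻¹ * (R * single i i 1 * R⁻¹) * K := by rw [hi]
          _ = single i i 1 * (R⁻¹ * K) := by
              simp only [Matrix.mul_assoc, ← Matrix.mul_assoc R⁻¹ R, hRmul', Matrix.one_mul]
          _ = single i i 1 * (M * Rᵀ) := by rw [hMRT]
      calc M * single i i 1
          = M * single i i 1 * (Rᵀ * (Rᵀ)⁻¹) := by rw [hRTmul, Matrix.mul_one]
        _ = (M * single i i 1 * Rᵀ) * (Rᵀ)⁻¹ := by simp only [Matrix.mul_assoc]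
        _ = single i i 1 * (M * Rᵀ) * (Rᵀ)⁻¹ := by rw [key]
        _ = single i i 1 * M := by
              simp only [Matrix.mul_assoc, hRTmul, Matrix.mul_one]
    have hMd : M.IsDiag := aux_isDiag_of_comm M h2
    have hMinvd : M⁻¹.IsDiag := by
      rw [← hMd.diagonal_diag, inv_diagonal]
      exact isDiag_diagonal _
    refine ⟨M⁻¹, K, hMinvd, isUnit_nonsing_inv_iff.mpr hMu, hKd, hKu, ?_⟩
    calc Rᵀ = M⁻¹ * M * Rᵀ := by rw [hMmul', Matrix.one_mul]
      _ = M⁻¹ * (M * Rᵀ) := by rw [Matrix.mul_assoc]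
      _ = M⁻¹ * (R⁻¹ * K) := by rw [hMRT]
      _ = M⁻¹ * R⁻¹ * K := by rw [Matrix.mul_assoc]
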